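/- For the KM system u̇_i = u_i(u_{i+1} - u_{i-1}) with u_0 = u_{N+1} = 0, the function H_2 = Σ_{i=1}^N (u_i²/2) + Σ_{i=1}^{N-1} u_i u_{i+1} is a constant of motion. -/

import Mathlib

lemma km_key_sum (a : ℕ → ℝ) (M : ℕ) :
    (∑ i ∈ Finset.Icc 1 (M + 1), a i * (a i * (a (i + 1) - a (i - 1))))
      + ∑ i ∈ Finset.Icc 1 M,
          (a i * (a (i + 1) - a (i - 1)) * a (i + 1)
            + a i * (a (i + 1) * (a (i + 2) - a i)))
    = a (M + 1) ^ 2 * a (M + 2) + a M * a (M + 1) * a (M + 2)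
      - a 1 ^ 2 * a 0 - a 0 * a 1 * a 2 := by
  induction M with
  | zero =>
      simp [Finset.Icc_self]
      ring
  | succ M ih =>
      rw [Finset.sum_Icc_succ_top (by omega : 1 ≤ M + 1),
          Finset.sum_Icc_succ_top (by omega : 1 ≤ M + 1 + 1)]
      simp only [show ∀ m : ℕ, m + 2 - 1 = m + 1 from fun _ => rfl,
        show ∀ m : ℕ, m + 1 - 1 = m from fun _ => rfl] at *
      linear_combination ih

/-- For the KM system `u̇ᵢ = uᵢ(uᵢ₊₁ - uᵢ₋₁)` with `u₀ = u_{N+1} = 0`, the function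
`H₂ = ∑ᵢ uᵢ²/2 + ∑ᵢ uᵢuᵢ₊₁` is a constant of motion. -/
theorem km_H2_constant_of_motion (N : ℕ) (u : ℝ → ℕ → ℝ)
    (hu0 : ∀ t, u t 0 = 0) (huN : ∀ t, u t (N + 1) = 0)
    (hode : ∀ t : ℝ, ∀ i ∈ Finset.Icc 1 N,
      HasDerivAt (fun s => u s i) (u t i * (u t (i + 1) - u t (i - 1))) t) :
    ∀ t : ℝ, HasDerivAt
      (fun s => (∑ i ∈ Finset.Icc 1 N, (u s i) ^ 2 / 2)
        + ∑ i ∈ Finset.Icc 1 (N - 1), u s i * u s (i + 1)) 0 t := by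
  intro t
  rcases N with _ | M
  · have : Finset.Icc 1 0 = (∅ : Finset ℕ) := by decide
    simp only [this, Nat.zero_sub, Finset.sum_empty, add_zero]
    exact hasDerivAt_const t 0
  · have h1 : HasDerivAt (fun s => ∑ i ∈ Finset.Icc 1 (M + 1), (u s i) ^ 2 / 2)
        (∑ i ∈ Finset.Icc 1 (M + 1), u t i * (u t i * (u t (i + 1) - u t (i - 1)))) t := by
      apply HasDerivAt.fun_sum
      intro i hi
      have := ((hode t i hi).fun_pow 2).div_const 2
      refine this.congr_deriv ?_
      ring
    have h2 : HasDerivAt (fun s => ∑ i ∈ Finset.Icc 1 (M + 1 - 1), u s i * u s (i + 1))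
        (∑ i ∈ Finset.Icc 1 M,
          (u t i * (u t (i + 1) - u t (i - 1)) * u t (i + 1)
            + u t i * (u t (i + 1) * (u t (i + 2) - u t i)))) t := by
      simp only [Nat.add_sub_cancel]
      apply HasDerivAt.fun_sum
      intro i hi
      simp only [Finset.mem_Icc] at hi
      have hi1 : i ∈ Finset.Icc 1 (M + 1) := by simp [Finset.mem_Icc]; omega
      have hi2 : i + 1 ∈ Finset.Icc 1 (M + 1) := by simp [Finset.mem_Icc]; omega
      have := (hode t i hi1).fun_mul (hode t (i + 1) hi2)
      exact this
    have hkey := km_key_sum (u t) M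
    rw [hu0 t, huN t] at hkey
    have hzero : (∑ i ∈ Finset.Icc 1 (M + 1), u t i * (u t i * (u t (i + 1) - u t (i - 1))))
        + ∑ i ∈ Finset.Icc 1 M,
          (u t i * (u t (i + 1) - u t (i - 1)) * u t (i + 1)
            + u t i * (u t (i + 1) * (u t (i + 2) - u t i))) = 0 := by
      rw [hkey]; ring
    have h := h1.add h2
    rwa [hzero] at h
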